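/- Fix m ∈ ℕ, let n = m(m+1)/2, define c_0,...,c_n by Π_{i=1}^m(1-X^i) = Σ_i c_i X^i, and set d_j = Σ_{i=0}^{n-j} c_i for j = 1,...,n. Then for every non-empty subset S of {1,...,m}: Σ_{j=1}^n d_j · p(j,S) equals 1 if S = {1,...,m}, and equals 0 otherwise. -/

import Mathlib

/-- `pCount k S` is the number of partitions of `k` all of whose parts lie in `S`. -/
noncomputable def pCount (k : ℕ) (S : Finset ℕ) : ℕ :=
  Nat.card {P : Nat.Partition k // ∀ i ∈ P.parts, i ∈ S}

lemma pCount_eq_card (k : ℕ) (S : Finset ℕ) :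
    pCount k S = (Finset.univ.filter fun P : Nat.Partition k => ∀ i ∈ P.parts, i ∈ S).card := by
  rw [pCount, Nat.card_eq_fintype_card, Fintype.card_subtype]

lemma pCount_zero (S : Finset ℕ) : pCount 0 S = 1 := by
  rw [pCount_eq_card]
  rw [Finset.filter_true_of_mem (fun P _ => by simp)]
  simp

lemma pCount_empty (j : ℕ) (hj : j ≠ 0) : pCount j (∅ : Finset ℕ) = 0 := by
  rw [pCount_eq_card, Finset.card_eq_zero, Finset.filter_eq_empty_iff]
  intro P _
  obtain ⟨i, hi⟩ := Multiset.exists_mem_of_ne_zero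
    (s := P.parts) (fun h0 => hj (by rw [← P.parts_sum, h0]; rfl))
  exact fun h => absurd (h i hi) (by simp)

lemma pCount_insert_of_lt (j s : ℕ) (S : Finset ℕ) (hj : j < s) :
    pCount j (insert s S) = pCount j S := by
  rw [pCount_eq_card, pCount_eq_card]
  congr 1
  apply Finset.filter_congr
  intro P _
  constructor
  · intro h i hi
    rcases Finset.mem_insert.mp (h i hi) with rfl | h' 
    · exact absurd (Multiset.le_sum_of_mem hi) (by rw [P.parts_sum]; omega)
    · exact h'
  · exact fun h i hi => Finset.mem_insert_of_mem (h i hi)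

lemma pCount_insert_of_le (j s : ℕ) (S : Finset ℕ) (hs : 0 < s) (hsS : s ∉ S) (hsj : s ≤ j) :
    pCount j (insert s S) = pCount j S + pCount (j - s) (insert s S) := by
  classical
  simp only [pCount_eq_card]
  rw [← Finset.card_filter_add_card_filter_not
    (s := Finset.univ.filter fun P : Nat.Partition j => ∀ i ∈ P.parts, i ∈ insert s S)
    (p := fun P => s ∈ P.parts), add_comm]
  congr 1
  · -- partitions not using s ↔ parts in S
    rw [Finset.filter_filter]
    congr 1
    apply Finset.filter_congr
    intro P _
    constructor
    · rintro ⟨h1, h2⟩ i hi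
      rcases Finset.mem_insert.mp (h1 i hi) with rfl | h' 
      · exact absurd hi h2
      · exact h'
    · exact fun h => ⟨fun i hi => Finset.mem_insert_of_mem (h i hi),
        fun hmem => hsS (h s hmem)⟩
  · -- partitions using s ↔ partitions of j - s
    rw [Finset.filter_filter]
    apply Finset.card_bij
      (fun P hP => (⟨P.parts.erase s, fun hi => P.parts_pos (Multiset.mem_of_mem_erase hi), by
        have hc : s ∈ P.parts := (Finset.mem_filter.mp hP).2.2
        have := Multiset.cons_erase hc
        have h2 : (s ::ₘ P.parts.erase s).sum = j := by rw [this, P.parts_sum]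
        rw [Multiset.sum_cons] at h2
        omega⟩ : Nat.Partition (j - s)))
    · -- maps into target
      intro P hP
      simp only [Finset.mem_filter, Finset.mem_univ, true_and] at hP ⊢
      exact fun i hi => hP.1 i (Multiset.mem_of_mem_erase hi)
    · -- injective
      intro P hP Q hQ h
      simp only [Finset.mem_filter, Finset.mem_univ, true_and] at hP hQ
      have h' : P.parts.erase s = Q.parts.erase s := congrArg Nat.Partition.parts h
      apply Nat.Partition.ext
      rw [← Multiset.cons_erase hP.2, ← Multiset.cons_erase hQ.2, h']
    · -- surjective
      intro Q hQ
      simp only [Finset.mem_filter, Finset.mem_univ, true_and] at hQ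
      refine ⟨⟨s ::ₘ Q.parts, ?_, ?_⟩, ?_, ?_⟩
      · intro i hi
        rcases Multiset.mem_cons.mp hi with rfl | h'
        · exact hs
        · exact Q.parts_pos h'
      · rw [Multiset.sum_cons, Q.parts_sum]; omega
      · simp only [Finset.mem_filter, Finset.mem_univ, true_and]
        constructor
        · intro i hi
          rcases Multiset.mem_cons.mp hi with rfl | h'
          · exact Finset.mem_insert_self _ _
          · exact hQ i h'
        · exact Multiset.mem_cons_self _ _
      · apply Nat.Partition.ext
        simp [Multiset.erase_cons_head]

open PowerSeries in
lemma key_mul (s : ℕ) (S : Finset ℕ) (hs : 0 < s) (hsS : s ∉ S) :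
    (1 - (PowerSeries.X : PowerSeries ℤ) ^ s) *
      PowerSeries.mk (fun j => (pCount j (insert s S) : ℤ)) =
      PowerSeries.mk (fun j => (pCount j S : ℤ)) := by
  ext k
  simp only [sub_mul, one_mul, map_sub, coeff_X_pow_mul', PowerSeries.coeff_mk]
  split_ifs with h
  · rw [pCount_insert_of_le k s S hs hsS h]
    push_cast; ring
  · rw [pCount_insert_of_lt k s S (by omega)]
    ring

open PowerSeries in
lemma prod_mul_pS (S : Finset ℕ) (hpos : ∀ s ∈ S, 0 < s) :
    (∏ s ∈ S, (1 - (PowerSeries.X : PowerSeries ℤ) ^ s)) *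
      PowerSeries.mk (fun j => (pCount j S : ℤ)) = 1 := by
  classical
  induction S using Finset.induction_on with
  | empty =>
    rw [Finset.prod_empty, one_mul]
    ext k
    rw [PowerSeries.coeff_mk, PowerSeries.coeff_one]
    rcases Nat.eq_zero_or_pos k with rfl | hk
    · simp [pCount_zero]
    · rw [if_neg (by omega), pCount_empty k (by omega)]; rfl
  | @insert s S' hsS ih =>
    rw [Finset.prod_insert hsS, mul_comm (1 - _), mul_assoc,
      key_mul s S' (hpos s (Finset.mem_insert_self _ _)) hsS]
    exact ih fun t ht => hpos t (Finset.mem_insert_of_mem ht)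

lemma coe_prod_aux (T : Finset ℕ) :
    (((∏ t ∈ T, (1 - Polynomial.X ^ t : Polynomial ℤ)) : Polynomial ℤ) : PowerSeries ℤ) =
      ∏ t ∈ T, (1 - (PowerSeries.X : PowerSeries ℤ) ^ t) := by
  rw [← Polynomial.coeToPowerSeries.ringHom_apply, map_prod]
  refine Finset.prod_congr rfl fun t _ => ?_
  rw [map_sub, map_one, map_pow, Polynomial.coeToPowerSeries.ringHom_apply, Polynomial.coe_X]

open PowerSeries in
lemma coeff_FG (m : ℕ) (S : Finset ℕ) (hSm : S ⊆ Finset.Icc 1 m) (k : ℕ) :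
    (PowerSeries.coeff k)
      ((((∏ t ∈ Finset.Icc 1 m, (1 - Polynomial.X ^ t : Polynomial ℤ)) : Polynomial ℤ) : PowerSeries ℤ) *
        PowerSeries.mk (fun j => (pCount j S : ℤ))) =
      (∏ t ∈ Finset.Icc 1 m \ S, (1 - Polynomial.X ^ t : Polynomial ℤ)).coeff k := by
  have hcoe : (((∏ t ∈ Finset.Icc 1 m, (1 - Polynomial.X ^ t : Polynomial ℤ)) : Polynomial ℤ) :
      PowerSeries ℤ) = ∏ t ∈ Finset.Icc 1 m, (1 - (PowerSeries.X : PowerSeries ℤ) ^ t) :=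
    coe_prod_aux _
  rw [hcoe, ← Finset.prod_sdiff hSm, mul_assoc,
    prod_mul_pS S (fun t ht => by have := (Finset.mem_Icc.mp (hSm ht)).1; omega), mul_one]
  have hcoe2 : (∏ t ∈ Finset.Icc 1 m \ S, (1 - (PowerSeries.X : PowerSeries ℤ) ^ t)) =
      (((∏ t ∈ Finset.Icc 1 m \ S, (1 - Polynomial.X ^ t : Polynomial ℤ)) : Polynomial ℤ) :
        PowerSeries ℤ) := (coe_prod_aux _).symm
  rw [hcoe2, Polynomial.coeff_coe]

lemma triangle_sum {M : Type*} [AddCommMonoid M] (f : ℕ → ℕ → M) (N : ℕ) :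
    ∑ j ∈ Finset.range N, ∑ i ∈ Finset.range (N - j), f i j =
      ∑ k ∈ Finset.range N, ∑ ij ∈ Finset.HasAntidiagonal.antidiagonal k, f ij.1 ij.2 := by
  induction N with
  | zero => simp
  | succ N ih =>
    have h1 : ∀ j ∈ Finset.range (N + 1), ∑ i ∈ Finset.range (N + 1 - j), f i j =
        ∑ i ∈ Finset.range (N - j), f i j + f (N - j) j := by
      intro j hj
      rw [Nat.succ_sub (Nat.lt_succ_iff.mp (Finset.mem_range.mp hj)), Finset.sum_range_succ]
    rw [Finset.sum_congr rfl h1, Finset.sum_add_distrib,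
      Finset.sum_range_succ (f := fun j => ∑ i ∈ Finset.range (N - j), f i j)]
    simp only [Nat.sub_self, Finset.range_zero, Finset.sum_empty, add_zero]
    rw [ih, Finset.sum_range_succ (f := fun k => ∑ ij ∈ Finset.HasAntidiagonal.antidiagonal k, f ij.1 ij.2)]
    congr 1
    rw [Finset.Nat.sum_antidiagonal_eq_sum_range_succ f N, ← Finset.sum_range_reflect]
    refine Finset.sum_congr rfl fun j hj => ?_
    have hj' := Finset.mem_range.mp hj
    congr 1
    all_goals omega

lemma natDegree_prod_le' (T : Finset ℕ) :
    (∏ t ∈ T, (1 - Polynomial.X ^ t : Polynomial ℤ)).natDegree ≤ ∑ t ∈ T, t := by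
  refine le_trans (Polynomial.natDegree_prod_le _ _) (Finset.sum_le_sum fun t _ => ?_)
  refine le_trans (Polynomial.natDegree_sub_le _ _) ?_
  simp [Polynomial.natDegree_X_pow]

lemma sum_coeff_eq_eval_one (P : Polynomial ℤ) (n : ℕ) (h : P.natDegree ≤ n) :
    ∑ i ∈ Finset.range (n + 1), P.coeff i = P.eval 1 := by
  rw [Polynomial.eval_eq_sum_range' (Nat.lt_succ_of_le h)]
  simp

lemma gauss_icc (m : ℕ) : ∑ t ∈ Finset.Icc 1 m, t = m * (m + 1) / 2 := by
  have h : Finset.range (m + 1) = insert 0 (Finset.Icc 1 m) := by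
    ext x; simp [Nat.lt_succ_iff]; omega
  have := Finset.sum_range_id (m + 1)
  rw [h, Finset.sum_insert (by simp)] at this
  simpa [Nat.mul_comm] using this


/-- Fix `m`, let `n = m(m+1)/2`, let `c_i` be the coefficients of
`∏_{i=1}^m (1 - Xⁱ)` and set `d_j = ∑_{i=0}^{n-j} c_i`. For every non-empty subset
`S ⊆ {1,...,m}`: `∑_{j=1}^n d_j p(j,S)` equals `1` if `S = {1,...,m}` and `0` otherwise. -/
theorem pCount_d_sum (m : ℕ) (S : Finset ℕ) (hS : S.Nonempty)
    (hSm : S ⊆ Finset.Icc 1 m) :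
    (∑ j ∈ Finset.Icc 1 (m * (m + 1) / 2),
        (∑ i ∈ Finset.range (m * (m + 1) / 2 - j + 1),
            (∏ t ∈ Finset.Icc 1 m, (1 - Polynomial.X ^ t : Polynomial ℤ)).coeff i) *
          (pCount j S : ℤ)) =
      if S = Finset.Icc 1 m then 1 else 0 := by
  classical
  obtain ⟨s0, hs0⟩ := hS
  have hm : 1 ≤ m := le_trans (Finset.mem_Icc.mp (hSm hs0)).1 (Finset.mem_Icc.mp (hSm hs0)).2
  set n := m * (m + 1) / 2 with hn
  set F := ∏ t ∈ Finset.Icc 1 m, (1 - Polynomial.X ^ t : Polynomial ℤ) with hF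
  set H := ∏ t ∈ Finset.Icc 1 m \ S, (1 - Polynomial.X ^ t : Polynomial ℤ) with hH
  have hrange : Finset.range (n + 1) = insert 0 (Finset.Icc 1 n) := by
    ext x; simp [Nat.lt_succ_iff]; omega
  have hsplit : ∑ j ∈ Finset.range (n + 1),
      (∑ i ∈ Finset.range (n - j + 1), F.coeff i) * (pCount j S : ℤ)
      = (∑ i ∈ Finset.range (n + 1), F.coeff i) * (pCount 0 S : ℤ)
        + ∑ j ∈ Finset.Icc 1 n, (∑ i ∈ Finset.range (n - j + 1), F.coeff i) * (pCount j S : ℤ) := by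
    rw [hrange, Finset.sum_insert (by simp)]
    norm_num
    left
    rw [hrange, Finset.sum_insert (by simp)]
  have hT1 : ∑ j ∈ Finset.range (n + 1),
      (∑ i ∈ Finset.range (n - j + 1), F.coeff i) * (pCount j S : ℤ)
      = H.eval 1 := by
    have step1 : ∀ j ∈ Finset.range (n + 1),
        (∑ i ∈ Finset.range (n - j + 1), F.coeff i) * (pCount j S : ℤ)
        = ∑ i ∈ Finset.range (n + 1 - j), F.coeff i * (pCount j S : ℤ) := by
      intro j hj
      rw [Finset.sum_mul]
      have : n - j + 1 = n + 1 - j := by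
        have := Finset.mem_range.mp hj; omega
      rw [this]
    rw [Finset.sum_congr rfl step1,
      triangle_sum (fun i j => F.coeff i * (pCount j S : ℤ)) (n + 1)]
    have step2 : ∀ k, ∑ ij ∈ Finset.HasAntidiagonal.antidiagonal k,
        F.coeff ij.1 * (pCount ij.2 S : ℤ) = H.coeff k := by
      intro k
      rw [← coeff_FG m S hSm k, PowerSeries.coeff_mul]
      refine Finset.sum_congr rfl fun ij _ => ?_
      rw [Polynomial.coeff_coe, PowerSeries.coeff_mk]
    simp only [step2]
    apply sum_coeff_eq_eval_one
    refine le_trans (natDegree_prod_le' _) ?_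
    calc ∑ t ∈ Finset.Icc 1 m \ S, t ≤ ∑ t ∈ Finset.Icc 1 m, t :=
          Finset.sum_le_sum_of_subset Finset.sdiff_subset
      _ = n := gauss_icc m
  have hF1 : ∑ i ∈ Finset.range (n + 1), F.coeff i = 0 := by
    rw [sum_coeff_eq_eval_one F n (le_trans (natDegree_prod_le' _) (le_of_eq (gauss_icc m)))]
    rw [hF, Polynomial.eval_prod]
    exact Finset.prod_eq_zero (Finset.mem_Icc.mpr ⟨le_refl 1, hm⟩) (by simp)
  rw [hT1, hF1, zero_mul, zero_add] at hsplit
  rw [← hsplit]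
  by_cases hSe : S = Finset.Icc 1 m
  · rw [if_pos hSe, hH, hSe]
    simp
  · rw [if_neg hSe, hH, Polynomial.eval_prod]
    obtain ⟨t, ht⟩ := Finset.sdiff_nonempty.mpr (fun h => hSe (Finset.Subset.antisymm hSm h))
    exact Finset.prod_eq_zero ht (by simp)
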